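/- Assume the system is q-eigenvalue observable with s ≤ q ≤ 2s, and the data Y_1,…,Y_p are generated under at most s attacks from some x_true. Then: (a) each X_j is a nonempty finite set; (b) for every plausible state x and every j, P_j x ∈ X_j; (c) for every row vector κ ∈ ℝ^{1×n} and every plausible state x, κ x ≤ Σ_{j=1}^r max_{x_j ∈ X_j} κ x_j. In particular, the per-subspace maxima furnish an upper bound on max over plausible states of κ x. (Proposition 2: the decomposition-based bound overestimates the exact CBF bound M(Y).) -/

import Mathlib

open Matrix

noncomputable section
open Polynomial

/-- Generalized eigenspace of `A` for the eigenvalue `μ`: `ker((A - μ I)^n)`. -/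
def genEig {n : ℕ} (A : Matrix (Fin n) (Fin n) ℝ) (μ : ℝ) : Set (Fin n → ℝ) :=
  {x | ((A - μ • 1) ^ n).mulVec x = 0}

/-- Observability map of sensor `i` over horizon `t`: `(𝒪_i x)_τ = C_i A^τ x`. -/
def obsMap {n p : ℕ} (t : ℕ) (A : Matrix (Fin n) (Fin n) ℝ)
    (C : Matrix (Fin p) (Fin n) ℝ) (i : Fin p) (x : Fin n → ℝ) : Fin (t + 1) → ℝ :=
  fun τ => ((C * A ^ (τ : ℕ)).mulVec x) i

/-- `x` is a plausible state for the data `Y`: some set `Γ` of `p - s` sensors is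
exactly explained by `x`. -/
def plausible {n p : ℕ} (t : ℕ) (A : Matrix (Fin n) (Fin n) ℝ)
    (C : Matrix (Fin p) (Fin n) ℝ) (s : ℕ) (Y : Fin p → Fin (t + 1) → ℝ)
    (x : Fin n → ℝ) : Prop :=
  ∃ Γ : Finset (Fin p), Γ.card = p - s ∧ ∀ i ∈ Γ, obsMap t A C i x = Y i

/-- The eigenvalue `μ` of `A` is observable with respect to sensor `i` (over `ℂ`). -/
def eigObs {n p : ℕ} (A : Matrix (Fin n) (Fin n) ℝ)
    (C : Matrix (Fin p) (Fin n) ℝ) (μ : ℝ) (i : Fin p) : Prop :=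
  ∀ v : Fin n → ℂ, (A.map Complex.ofReal).mulVec v = (μ : ℂ) • v →
    ((C.map Complex.ofReal).mulVec v) i = 0 → v = 0

/-- The substate `xj ∈ V^j` agrees with sensor `i`: some choice of substates in the
other generalized eigenspaces makes the total response match the data `Y i`. -/
def agrees {n p r : ℕ} (t : ℕ) (A : Matrix (Fin n) (Fin n) ℝ)
    (C : Matrix (Fin p) (Fin n) ℝ) (lam : Fin r → ℝ)
    (Y : Fin p → Fin (t + 1) → ℝ) (j : Fin r) (xj : Fin n → ℝ) (i : Fin p) : Prop :=
  ∃ z : Fin r → Fin n → ℝ, (∀ k, k ≠ j → z k ∈ genEig A (lam k)) ∧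
    obsMap t A C i (xj + ∑ k ∈ Finset.univ.erase j, z k) = Y i

/-- `X_j`: the substates in `V^j` that agree with at least `q + 1 - s` sensors for
which `λ_j` is observable. -/
def Xset {n p r : ℕ} (t : ℕ) (A : Matrix (Fin n) (Fin n) ℝ)
    (C : Matrix (Fin p) (Fin n) ℝ) (lam : Fin r → ℝ)
    (Y : Fin p → Fin (t + 1) → ℝ) (s q : ℕ) (j : Fin r) : Set (Fin n → ℝ) :=
  {xj | xj ∈ genEig A (lam j) ∧
    q + 1 - s ≤ {i : Fin p | eigObs A C (lam j) i ∧ agrees t A C lam Y j xj i}.ncard}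

/-- `I_j(xj)`: the sensors that do not agree with the substate `xj`. -/
def Iset {n p r : ℕ} (t : ℕ) (A : Matrix (Fin n) (Fin n) ℝ)
    (C : Matrix (Fin p) (Fin n) ℝ) (lam : Fin r → ℝ)
    (Y : Fin p → Fin (t + 1) → ℝ) (j : Fin r) (xj : Fin n → ℝ) : Set (Fin p) :=
  {i | ¬ agrees t A C lam Y j xj i}

-- helper: mulVec of a sum of matrices
lemma sum_mulVec' {n m : ℕ} {ι : Type*} [DecidableEq ι] (s : Finset ι) (M : ι → Matrix (Fin m) (Fin n) ℝ)
    (v : Fin n → ℝ) : (∑ k ∈ s, M k).mulVec v = ∑ k ∈ s, (M k).mulVec v := by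
  induction s using Finset.induction_on with
  | empty => funext i0; simp [Matrix.mulVec, dotProduct]
  | insert _ _ h ih => simp [Finset.sum_insert h, Matrix.add_mulVec, ih]

lemma mulVec_sum' {n m : ℕ} {ι : Type*} [DecidableEq ι] (s : Finset ι) (M : Matrix (Fin m) (Fin n) ℝ)
    (v : ι → Fin n → ℝ) : M.mulVec (∑ k ∈ s, v k) = ∑ k ∈ s, M.mulVec (v k) := by
  induction s using Finset.induction_on with
  | empty => simp
  | insert _ _ h ih => simp [Finset.sum_insert h, Matrix.mulVec_add, ih]

lemma dot_sum' {n : ℕ} {ι : Type*} [DecidableEq ι] (s : Finset ι) (κ : Fin n → ℝ) (v : ι → Fin n → ℝ) :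
    κ ⬝ᵥ (∑ k ∈ s, v k) = ∑ k ∈ s, κ ⬝ᵥ v k := by
  induction s using Finset.induction_on with
  | empty => simp
  | insert _ _ h ih => simp [Finset.sum_insert h, dotProduct_add, ih]

-- N-set closure under aeval
lemma Nmem_aeval {n p : ℕ} (A : Matrix (Fin n) (Fin n) ℝ) (C : Matrix (Fin p) (Fin n) ℝ)
    (i : Fin p) (v : Fin n → ℝ) (hv : ∀ τ : ℕ, ((C * A ^ τ).mulVec v) i = 0)
    (f : Polynomial ℝ) (τ : ℕ) :
    ((C * A ^ τ).mulVec ((Polynomial.aeval A f).mulVec v)) i = 0 := by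
  induction f using Polynomial.induction_on' generalizing τ with
  | add f g hf hg =>
      rw [map_add, Matrix.add_mulVec, Matrix.mulVec_add, Pi.add_apply, hf τ, hg τ, add_zero]
  | monomial k c =>
      rw [aeval_monomial, Matrix.mulVec_mulVec]
      have : C * A ^ τ * (algebraMap ℝ (Matrix (Fin n) (Fin n) ℝ) c * A ^ k)
          = c • (C * A ^ (τ + k)) := by
        rw [Algebra.algebraMap_eq_smul_one, smul_mul_assoc, one_mul, Matrix.mul_smul,
          pow_add]
        exact congrArg (c • ·) (Matrix.mul_assoc C (A ^ τ) (A ^ k))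
      rw [this, Matrix.smul_mulVec]
      simp [hv (τ + k)]

-- extension of zero outputs past horizon n
lemma output_ext {n p : ℕ} (A : Matrix (Fin n) (Fin n) ℝ) (C : Matrix (Fin p) (Fin n) ℝ)
    (i : Fin p) (x : Fin n → ℝ) (h : ∀ τ, τ < n → ((C * A ^ τ).mulVec x) i = 0)
    (τ : ℕ) : ((C * A ^ τ).mulVec x) i = 0 := by
  rcases Nat.eq_zero_or_pos n with hn | hn
  · subst hn
    simp [Matrix.mulVec, dotProduct]
  · have hdeg : (X ^ τ %ₘ A.charpoly).natDegree < n := by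
      have h1 : A.charpoly.natDegree = n := by
        rw [Matrix.charpoly_natDegree_eq_dim, Fintype.card_fin]
      have := Polynomial.natDegree_modByMonic_lt (X ^ τ : ℝ[X]) A.charpoly_monic
        (fun hc => by rw [hc] at h1; simp at h1; omega)
      omega
    rw [Matrix.pow_eq_aeval_mod_charpoly, Polynomial.aeval_eq_sum_range' hdeg,
      ← Matrix.mulVec_mulVec, sum_mulVec', mulVec_sum', Finset.sum_apply]
    apply Finset.sum_eq_zero
    intro k hk
    rw [Finset.mem_range] at hk
    rw [Matrix.smul_mulVec, Matrix.mulVec_smul]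
    simp [h k hk]

lemma aeval_X_sub_C_pow_any {n : ℕ} (A : Matrix (Fin n) (Fin n) ℝ) (μ : ℝ) (k : ℕ) :
    (A - μ • 1) ^ k = Polynomial.aeval A ((X - Polynomial.C μ) ^ k) := by
  rw [map_pow, map_sub, aeval_X, aeval_C, Algebra.algebraMap_eq_smul_one]

lemma aeval_X_sub_C_pow {n : ℕ} (A : Matrix (Fin n) (Fin n) ℝ) (μ : ℝ) :
    Polynomial.aeval A ((X - Polynomial.C μ) ^ n) = (A - μ • 1) ^ n := by
  rw [map_pow, map_sub, aeval_X, aeval_C, Algebra.algebraMap_eq_smul_one]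

-- MAIN uniqueness lemma
lemma component_zero {n p r t : ℕ} (ht : n - 1 ≤ t)
    (A : Matrix (Fin n) (Fin n) ℝ) (C : Matrix (Fin p) (Fin n) ℝ)
    (lam : Fin r → ℝ) (hlam : Function.Injective lam) (j : Fin r) (i : Fin p)
    (hobs : ∀ v : Fin n → ℂ, (A.map Complex.ofReal).mulVec v = ((lam j : ℝ) : ℂ) • v →
      ((C.map Complex.ofReal).mulVec v) i = 0 → v = 0)
    (x : Fin r → Fin n → ℝ) (hx : ∀ k, x k ∈ genEig A (lam k))
    (h0 : ∀ τ : Fin (t + 1), ((C * A ^ (τ : ℕ)).mulVec (∑ k, x k)) i = 0) :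
    x j = 0 := by
  rcases Nat.eq_zero_or_pos n with hn | hn
  · subst hn; exact funext fun i0 => i0.elim0
  have hall : ∀ τ : ℕ, ((C * A ^ τ).mulVec (∑ k, x k)) i = 0 := by
    apply output_ext
    intro τ hτ
    have hτt : τ < t + 1 := by omega
    exact h0 ⟨τ, hτt⟩
  set q : ℝ[X] := ∏ k ∈ Finset.univ.erase j, (X - Polynomial.C (lam k)) ^ n with hq
  -- y := aeval q applied to whole sum equals applied to x j
  have hker : ∀ k, k ≠ j → (Polynomial.aeval A q).mulVec (x k) = 0 := by
    intro k hk
    have hkmem : k ∈ Finset.univ.erase j := Finset.mem_erase.2 ⟨hk, Finset.mem_univ k⟩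
    have hsplit : q = (∏ m ∈ (Finset.univ.erase j).erase k, (X - Polynomial.C (lam m)) ^ n)
        * (X - Polynomial.C (lam k)) ^ n := by
      rw [hq, ← Finset.prod_erase_mul _ _ hkmem]
    rw [hsplit, map_mul (Polynomial.aeval A), aeval_X_sub_C_pow, ← Matrix.mulVec_mulVec,
      hx k, Matrix.mulVec_zero]
  have hy_sum : (Polynomial.aeval A q).mulVec (∑ k, x k)
      = (Polynomial.aeval A q).mulVec (x j) := by
    rw [mulVec_sum']
    rw [Finset.sum_eq_single j]
    · intro k _ hk; exact hker k hk
    · intro h; exact absurd (Finset.mem_univ j) h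
  have hyN : ∀ τ : ℕ, ((C * A ^ τ).mulVec ((Polynomial.aeval A q).mulVec (x j))) i = 0 := by
    intro τ
    rw [← hy_sum]
    exact Nmem_aeval A C i _ hall q τ
  have hcomm : ((A - lam j • 1) ^ n) * (Polynomial.aeval A q)
      = (Polynomial.aeval A q) * ((A - lam j • 1) ^ n) := by
    rw [← aeval_X_sub_C_pow, ← map_mul (Polynomial.aeval A), mul_comm,
      map_mul (Polynomial.aeval A)]
  have hxj : ((A - lam j • 1) ^ n).mulVec (x j) = 0 := hx j
  have hyV : ((A - lam j • 1) ^ n).mulVec ((Polynomial.aeval A q).mulVec (x j)) = 0 := by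
    rw [Matrix.mulVec_mulVec, hcomm, ← Matrix.mulVec_mulVec, hxj, Matrix.mulVec_zero]
  have hcop : IsCoprime ((X - Polynomial.C (lam j)) ^ n) q := by
    apply IsCoprime.prod_right
    intro k hk
    have hkj : k ≠ j := (Finset.mem_erase.1 hk).1
    exact (Polynomial.pairwise_coprime_X_sub_C hlam (Ne.symm hkj)).pow
  obtain ⟨a, b, hab⟩ := hcop
  have hxj_from_y : x j
      = (Polynomial.aeval A b).mulVec ((Polynomial.aeval A q).mulVec (x j)) := by
    calc x j = (Polynomial.aeval A (a * (X - Polynomial.C (lam j)) ^ n + b * q)).mulVec (x j) := by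
            rw [hab, Polynomial.aeval_one, Matrix.one_mulVec]
      _ = (Polynomial.aeval A b).mulVec ((Polynomial.aeval A q).mulVec (x j)) := by
            rw [map_add (Polynomial.aeval A), Matrix.add_mulVec, map_mul (Polynomial.aeval A),
              map_mul (Polynomial.aeval A), ← Matrix.mulVec_mulVec, ← Matrix.mulVec_mulVec,
              aeval_X_sub_C_pow, hxj, Matrix.mulVec_zero, zero_add]
  suffices hy0 : (Polynomial.aeval A q).mulVec (x j) = 0 by
    rw [hxj_from_y, hy0, Matrix.mulVec_zero]
  by_contra hy
  have hex : ∃ m : ℕ, ((A - lam j • 1) ^ m).mulVec ((Polynomial.aeval A q).mulVec (x j)) = 0 :=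
    ⟨n, hyV⟩
  have hm0 : Nat.find hex ≠ 0 := by
    intro h
    have h2 := Nat.find_spec hex
    rw [h, pow_zero, Matrix.one_mulVec] at h2
    exact hy h2
  have hw0 : ((A - lam j • 1) ^ (Nat.find hex - 1)).mulVec
      ((Polynomial.aeval A q).mulVec (x j)) ≠ 0 := Nat.find_min hex (by omega)
  have hAw : A.mulVec (((A - lam j • 1) ^ (Nat.find hex - 1)).mulVec
      ((Polynomial.aeval A q).mulVec (x j)))
      = lam j • (((A - lam j • 1) ^ (Nat.find hex - 1)).mulVec
        ((Polynomial.aeval A q).mulVec (x j))) := by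
    have h1 : (A - lam j • 1).mulVec (((A - lam j • 1) ^ (Nat.find hex - 1)).mulVec
        ((Polynomial.aeval A q).mulVec (x j))) = 0 := by
      rw [Matrix.mulVec_mulVec, ← pow_succ']
      have hmm : Nat.find hex - 1 + 1 = Nat.find hex := by omega
      rw [hmm]
      exact Nat.find_spec hex
    have h2 : (A - lam j • 1).mulVec (((A - lam j • 1) ^ (Nat.find hex - 1)).mulVec
        ((Polynomial.aeval A q).mulVec (x j)))
        = A.mulVec (((A - lam j • 1) ^ (Nat.find hex - 1)).mulVec
          ((Polynomial.aeval A q).mulVec (x j)))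
          - lam j • (((A - lam j • 1) ^ (Nat.find hex - 1)).mulVec
            ((Polynomial.aeval A q).mulVec (x j))) := by
      rw [Matrix.sub_mulVec, Matrix.smul_mulVec, Matrix.one_mulVec]
    rw [h2, sub_eq_zero] at h1
    exact h1
  set w : Fin n → ℝ := ((A - lam j • 1) ^ (Nat.find hex - 1)).mulVec
    ((Polynomial.aeval A q).mulVec (x j)) with hwdef
  have hwN : ∀ τ : ℕ, ((C * A ^ τ).mulVec w) i = 0 := by
    intro τ
    rw [hwdef, aeval_X_sub_C_pow_any A (lam j) (Nat.find hex - 1)]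
    exact Nmem_aeval A C i _ hyN _ τ
  have hCw : (C.mulVec w) i = 0 := by
    have h3 := hwN 0
    rwa [pow_zero, Matrix.mul_one] at h3
  have hv1 : (A.map Complex.ofReal).mulVec (fun i0 => ((w i0 : ℝ) : ℂ))
      = ((lam j : ℝ) : ℂ) • (fun i0 => ((w i0 : ℝ) : ℂ)) := by
    funext i0
    have e1 : ((A.map Complex.ofReal).mulVec (fun i0 => ((w i0 : ℝ) : ℂ))) i0
        = ((A.mulVec w i0 : ℝ) : ℂ) := by
      simp [Matrix.mulVec, dotProduct, Matrix.map_apply]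
    rw [e1, hAw]
    simp
  have hv2 : ((C.map Complex.ofReal).mulVec (fun i0 => ((w i0 : ℝ) : ℂ))) i = 0 := by
    have e1 : ((C.map Complex.ofReal).mulVec (fun i0 => ((w i0 : ℝ) : ℂ))) i
        = ((C.mulVec w i : ℝ) : ℂ) := by
      simp [Matrix.mulVec, dotProduct, Matrix.map_apply]
    rw [e1, hCw, Complex.ofReal_zero]
  have hv0 := hobs _ hv1 hv2
  apply hw0
  funext i0
  have h4 : ((w i0 : ℝ) : ℂ) = 0 := congrFun hv0 i0
  exact_mod_cast h4


lemma genEig_sub {n : ℕ} {A : Matrix (Fin n) (Fin n) ℝ} {μ : ℝ} {u v : Fin n → ℝ}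
    (hu : u ∈ genEig A μ) (hv : v ∈ genEig A μ) : u - v ∈ genEig A μ := by
  have hu' : ((A - μ • 1) ^ n).mulVec u = 0 := hu
  have hv' : ((A - μ • 1) ^ n).mulVec v = 0 := hv
  show ((A - μ • 1) ^ n).mulVec (u - v) = 0
  rw [Matrix.mulVec_sub, hu', hv', sub_zero]

lemma agree_unique {n p r t : ℕ} (ht : n - 1 ≤ t)
    (A : Matrix (Fin n) (Fin n) ℝ) (C : Matrix (Fin p) (Fin n) ℝ)
    (lam : Fin r → ℝ) (hlam : Function.Injective lam)
    (Y : Fin p → Fin (t + 1) → ℝ) (j : Fin r) (i : Fin p)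
    (hobs : eigObs A C (lam j) i)
    {x1 x2 : Fin n → ℝ} (h1 : x1 ∈ genEig A (lam j)) (h2 : x2 ∈ genEig A (lam j))
    (ha1 : agrees t A C lam Y j x1 i) (ha2 : agrees t A C lam Y j x2 i) : x1 = x2 := by
  classical
  obtain ⟨z1, hz1, hY1⟩ := ha1
  obtain ⟨z2, hz2, hY2⟩ := ha2
  set d : Fin r → Fin n → ℝ := fun k => if k = j then x1 - x2 else z1 k - z2 k with hd
  have hdg : ∀ k, d k ∈ genEig A (lam k) := by
    intro k
    by_cases hk : k = j
    · subst hk; simp only [hd, if_pos rfl]; exact genEig_sub h1 h2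
    · simp only [hd, if_neg hk]; exact genEig_sub (hz1 k hk) (hz2 k hk)
  have hdsum : ∑ k, d k = (x1 + ∑ k ∈ Finset.univ.erase j, z1 k)
      - (x2 + ∑ k ∈ Finset.univ.erase j, z2 k) := by
    rw [← Finset.add_sum_erase Finset.univ d (Finset.mem_univ j)]
    have e1 : d j = x1 - x2 := by simp [hd]
    have e2 : ∑ k ∈ Finset.univ.erase j, d k
        = ∑ k ∈ Finset.univ.erase j, (z1 k - z2 k) := by
      apply Finset.sum_congr rfl
      intro k hk
      simp [hd, (Finset.mem_erase.1 hk).1]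
    rw [e1, e2, Finset.sum_sub_distrib]
    abel
  have h0 : ∀ τ : Fin (t + 1), ((C * A ^ (τ : ℕ)).mulVec (∑ k, d k)) i = 0 := by
    intro τ
    have e1 : ((C * A ^ (τ : ℕ)).mulVec (x1 + ∑ k ∈ Finset.univ.erase j, z1 k)) i = Y i τ :=
      congrFun hY1 τ
    have e2 : ((C * A ^ (τ : ℕ)).mulVec (x2 + ∑ k ∈ Finset.univ.erase j, z2 k)) i = Y i τ :=
      congrFun hY2 τ
    rw [hdsum, Matrix.mulVec_sub, Pi.sub_apply, e1, e2, sub_self]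
  have hz := component_zero ht A C lam hlam j i hobs d hdg h0
  have ej : d j = x1 - x2 := by simp [hd]
  rw [ej] at hz
  exact sub_eq_zero.1 hz

lemma ncard_helper {p s q : ℕ} (S T R : Set (Fin p)) (hS : q + 1 ≤ S.ncard)
    (hT : T.ncard ≤ s) (hsub : S \ T ⊆ R) : q + 1 - s ≤ R.ncard := by
  have h1 : S.ncard ≤ (S \ T).ncard + T.ncard := by
    have hsub2 : S ⊆ (S \ T) ∪ T := by
      intro a ha
      by_cases h : a ∈ T
      · exact Set.mem_union_right _ h
      · exact Set.mem_union_left _ ⟨ha, h⟩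
    calc S.ncard ≤ ((S \ T) ∪ T).ncard := Set.ncard_le_ncard hsub2 (Set.toFinite _)
      _ ≤ (S \ T).ncard + T.ncard := Set.ncard_union_le _ _
  have h2 : (S \ T).ncard ≤ R.ncard := Set.ncard_le_ncard hsub (Set.toFinite _)
  omega

lemma agrees_of_exact {n p r t : ℕ} (A : Matrix (Fin n) (Fin n) ℝ)
    (C : Matrix (Fin p) (Fin n) ℝ) (lam : Fin r → ℝ) (Y : Fin p → Fin (t + 1) → ℝ)
    (j : Fin r) (i : Fin p) (P : Fin r → Matrix (Fin n) (Fin n) ℝ)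
    (hPmem : ∀ k, ∀ x : Fin n → ℝ, (P k).mulVec x ∈ genEig A (lam k))
    (hPsum : ∀ x : Fin n → ℝ, ∑ k, (P k).mulVec x = x)
    (x : Fin n → ℝ) (hYx : obsMap t A C i x = Y i) :
    agrees t A C lam Y j ((P j).mulVec x) i := by
  refine ⟨fun k => (P k).mulVec x, fun k _ => hPmem k x, ?_⟩
  have e : (P j).mulVec x + ∑ k ∈ Finset.univ.erase j, (P k).mulVec x = x := by
    rw [Finset.add_sum_erase Finset.univ (fun k => (P k).mulVec x) (Finset.mem_univ j)]
    exact hPsum x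
  rw [e]
  exact hYx


/-- Proposition 2: the per-subspace candidate sets `X_j` are nonempty
and finite, they contain the projections of every plausible state, and the sum of
per-subspace maxima upper-bounds any linear functional over the plausible states. -/
theorem decomposition_bound_overestimates
    {n p r s q t : ℕ} (hsp : s ≤ p) (hsq : s ≤ q) (hq2s : q ≤ 2 * s) (ht : n - 1 ≤ t)
    (A : Matrix (Fin n) (Fin n) ℝ) (C : Matrix (Fin p) (Fin n) ℝ)
    (lam : Fin r → ℝ) (hlam : Function.Injective lam)
    (heig : ∀ j, ∃ w : Fin n → ℝ, w ≠ 0 ∧ A.mulVec w = lam j • w)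
    (P : Fin r → Matrix (Fin n) (Fin n) ℝ)
    (hPmem : ∀ j, ∀ x : Fin n → ℝ, (P j).mulVec x ∈ genEig A (lam j))
    (hPsum : ∀ x : Fin n → ℝ, ∑ j, (P j).mulVec x = x)
    (Y : Fin p → Fin (t + 1) → ℝ) (xtrue : Fin n → ℝ)
    (ΛA : Finset (Fin p)) (hΛA : ΛA.card ≤ s)
    (hdata : ∀ i ∉ ΛA, Y i = obsMap t A C i xtrue)
    (hqobs : ∀ j, q + 1 ≤ {i : Fin p | eigObs A C (lam j) i}.ncard) :
    (∀ j, (Xset t A C lam Y s q j).Finite ∧ (Xset t A C lam Y s q j).Nonempty) ∧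
    (∀ x : Fin n → ℝ, plausible t A C s Y x →
      ∀ j, (P j).mulVec x ∈ Xset t A C lam Y s q j) ∧
    (∀ κ : Fin n → ℝ, ∀ x : Fin n → ℝ, plausible t A C s Y x →
      κ ⬝ᵥ x ≤ ∑ j, sSup ((fun xj => κ ⬝ᵥ xj) '' Xset t A C lam Y s q j)) := by
  classical
  have hfin : ∀ j, (Xset t A C lam Y s q j).Finite := by
    intro j
    have hsub : ∀ i : Fin p, Set.Subsingleton {xj : Fin n → ℝ |
        xj ∈ genEig A (lam j) ∧ eigObs A C (lam j) i ∧ agrees t A C lam Y j xj i} := by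
      intro i x1 hx1 x2 hx2
      exact agree_unique ht A C lam hlam Y j i hx1.2.1 hx1.1 hx2.1 hx1.2.2 hx2.2.2
    apply Set.Finite.subset (Set.finite_iUnion fun i => (hsub i).finite)
    intro xj hxj
    obtain ⟨hg, hcard⟩ := hxj
    have hpos : {i : Fin p | eigObs A C (lam j) i ∧ agrees t A C lam Y j xj i}.ncard ≠ 0 := by
      omega
    obtain ⟨i, hi⟩ := Set.nonempty_of_ncard_ne_zero hpos
    exact Set.mem_iUnion.2 ⟨i, hg, hi.1, hi.2⟩
  have hXmem : ∀ x : Fin n → ℝ, plausible t A C s Y x →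
      ∀ j, (P j).mulVec x ∈ Xset t A C lam Y s q j := by
    intro x hx j
    obtain ⟨Γ, hΓcard, hΓ⟩ := hx
    refine ⟨hPmem j x, ?_⟩
    apply ncard_helper {i : Fin p | eigObs A C (lam j) i} ((↑Γ : Set (Fin p))ᶜ) _
      (hqobs j)
    · rw [← Finset.coe_compl, Set.ncard_coe_finset, Finset.card_compl, Fintype.card_fin,
        hΓcard]
      omega
    · rintro i ⟨hio, hiG⟩
      have hiΓ : i ∈ Γ := by simpa using hiG
      exact ⟨hio, agrees_of_exact A C lam Y j i P hPmem hPsum x (hΓ i hiΓ)⟩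
  have hne : ∀ j, (P j).mulVec xtrue ∈ Xset t A C lam Y s q j := by
    intro j
    refine ⟨hPmem j xtrue, ?_⟩
    apply ncard_helper {i : Fin p | eigObs A C (lam j) i} (↑ΛA : Set (Fin p)) _ (hqobs j)
    · rw [Set.ncard_coe_finset]; exact hΛA
    · rintro i ⟨hio, hiA⟩
      have hiA' : i ∉ ΛA := by simpa using hiA
      exact ⟨hio, agrees_of_exact A C lam Y j i P hPmem hPsum xtrue ((hdata i hiA').symm)⟩
  refine ⟨fun j => ⟨hfin j, ⟨_, hne j⟩⟩, hXmem, ?_⟩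
  intro κ x hx
  have h1 : κ ⬝ᵥ x = ∑ j, κ ⬝ᵥ ((P j).mulVec x) := by
    conv_lhs => rw [← hPsum x]
    exact dot_sum' Finset.univ κ _
  rw [h1]
  apply Finset.sum_le_sum
  intro j _
  exact le_csSup (((hfin j).image _).bddAbove) ⟨_, hXmem x hx j, rfl⟩
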